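/- For every monic irreducible polynomial $\pi \in A$, the polynomial $X$ divides $\rho_{\pi}(X)$ in $A[X]$, and the quotient $\rho_{\pi}(X)/X$ is a polynomial with coefficients in $A$ that is irreducible over the fraction field $K = \mathbb{F}_q(T)$. -/

import Mathlib

open Polynomial Finset

namespace CarlitzAux


variable {Fq : Type} [Field Fq] [Fintype Fq]

lemma carlitz_rec (ρ : Polynomial Fq → Polynomial (Polynomial Fq))
    (hρT : ρ Polynomial.X =
      Polynomial.C Polynomial.X * Polynomial.X + Polynomial.X ^ Fintype.card Fq)
    (hρmul : ∀ a b : Polynomial Fq, ρ (a * b) = (ρ a).comp (ρ b))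
    (a : Polynomial Fq) :
    ρ (Polynomial.X * a) = Polynomial.C Polynomial.X * ρ a + (ρ a) ^ Fintype.card Fq := by
  rw [hρmul, hρT, add_comp, mul_comp, C_comp, X_comp, pow_comp, X_comp]

lemma carlitz_shape (ρ : Polynomial Fq → Polynomial (Polynomial Fq))
    (hρC : ∀ c : Fq, ρ (Polynomial.C c) = Polynomial.C (Polynomial.C c) * Polynomial.X)
    (hρT : ρ Polynomial.X =
      Polynomial.C Polynomial.X * Polynomial.X + Polynomial.X ^ Fintype.card Fq)
    (hρadd : ∀ a b : Polynomial Fq, ρ (a + b) = ρ a + ρ b)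
    (hρmul : ∀ a b : Polynomial Fq, ρ (a * b) = (ρ a).comp (ρ b))
    (a : Polynomial Fq) :
    ∃ c : ℕ → Polynomial Fq,
      c 0 = a ∧ c a.natDegree = Polynomial.C a.leadingCoeff ∧
      (∀ k, a.natDegree < k → c k = 0) ∧
      ρ a = ∑ k ∈ Finset.range (a.natDegree + 1),
        Polynomial.C (c k) * Polynomial.X ^ (Fintype.card Fq ^ k) := by
  classical
  obtain ⟨e, hp, hcard⟩ := FiniteField.card Fq (ringChar Fq)
  set p := ringChar Fq with hpdef
  haveI : CharP (Polynomial Fq) p := charP_of_injective_ringHom Polynomial.C_injective p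
  haveI : CharP (Polynomial (Polynomial Fq)) p :=
    charP_of_injective_ringHom Polynomial.C_injective p
  haveI : ExpChar (Polynomial (Polynomial Fq)) p := ExpChar.prime hp
  suffices H : ∀ n (a : Polynomial Fq), a.natDegree ≤ n →
      ∃ c : ℕ → Polynomial Fq,
        c 0 = a ∧ c a.natDegree = Polynomial.C a.leadingCoeff ∧
        (∀ k, a.natDegree < k → c k = 0) ∧
        ρ a = ∑ k ∈ Finset.range (a.natDegree + 1),
          Polynomial.C (c k) * Polynomial.X ^ (Fintype.card Fq ^ k) from H a.natDegree a le_rfl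
  have base : ∀ a : Polynomial Fq, a.natDegree = 0 →
      ∃ c : ℕ → Polynomial Fq,
        c 0 = a ∧ c a.natDegree = Polynomial.C a.leadingCoeff ∧
        (∀ k, a.natDegree < k → c k = 0) ∧
        ρ a = ∑ k ∈ Finset.range (a.natDegree + 1),
          Polynomial.C (c k) * Polynomial.X ^ (Fintype.card Fq ^ k) := by
    intro a h0
    have haC : a = Polynomial.C (a.coeff 0) := Polynomial.eq_C_of_natDegree_eq_zero h0
    refine ⟨fun k => match k with | 0 => a | (_+1) => 0, rfl, ?_, ?_, ?_⟩
    · rw [h0, Polynomial.leadingCoeff, h0]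
      show a = Polynomial.C (a.coeff 0)
      exact haC
    · intro k hk
      match k, (by omega : k ≠ 0) with
      | (m+1), _ => rfl
    · rw [h0, Finset.sum_range_one]
      conv_lhs => rw [haC]
      rw [hρC]
      show _ = Polynomial.C a * Polynomial.X ^ (Fintype.card Fq ^ 0)
      rw [pow_zero, pow_one]
      conv_rhs => rw [haC]
  intro n
  induction n with
  | zero =>
    intro a ha
    exact base a (Nat.le_zero.mp ha)
  | succ n ih =>
    intro a ha
    by_cases h0 : a.natDegree = 0
    · exact base a h0
    · set b := a.divX with hbdef
      have hbdeg : b.natDegree = a.natDegree - 1 := natDegree_divX_eq_natDegree_tsub_one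
      have hd : a.natDegree = b.natDegree + 1 := by omega
      obtain ⟨c', hc0, hclead, hcz, hrepr⟩ := ih b (by omega)
      have ha_eq : Polynomial.X * b + Polynomial.C (a.coeff 0) = a := X_mul_divX_add a
      have key : ρ a = Polynomial.C Polynomial.X * ρ b + (ρ b ^ Fintype.card Fq
          + Polynomial.C (Polynomial.C (a.coeff 0)) * Polynomial.X) := by
        conv_lhs => rw [← ha_eq]
        rw [hρadd, carlitz_rec ρ hρT hρmul, hρC]
        ring
      have hpow : ρ b ^ Fintype.card Fq
          = ∑ k ∈ Finset.range (b.natDegree + 1),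
              Polynomial.C (c' k ^ Fintype.card Fq)
                * Polynomial.X ^ (Fintype.card Fq ^ (k + 1)) := by
        rw [hrepr, hcard, sum_pow_char_pow]
        refine Finset.sum_congr rfl fun k _ => ?_
        rw [mul_pow, ← Polynomial.C_pow, ← pow_mul, ← pow_succ]
      set d : ℕ → Polynomial Fq := fun k => match k with
        | 0 => Polynomial.C (a.coeff 0)
        | (m+1) => c' m ^ Fintype.card Fq with hddef
      set c : ℕ → Polynomial Fq := fun k => Polynomial.X * c' k + d k with hcdef
      have hlca : a.leadingCoeff = b.leadingCoeff := by
        have hco : a.coeff (b.natDegree + 1) = b.coeff b.natDegree := by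
          rw [← ha_eq, Polynomial.coeff_add, Polynomial.coeff_X_mul, Polynomial.coeff_C,
            if_neg (by omega), add_zero]
        rw [Polynomial.leadingCoeff, Polynomial.leadingCoeff, hd, hco]
      refine ⟨c, ?_, ?_, ?_, ?_⟩
      · show Polynomial.X * c' 0 + Polynomial.C (a.coeff 0) = a
        rw [hc0, ha_eq]
      · rw [hd]
        show Polynomial.X * c' (b.natDegree + 1) + c' b.natDegree ^ Fintype.card Fq
          = Polynomial.C a.leadingCoeff
        rw [hcz _ (by omega), hclead, mul_zero, zero_add, ← Polynomial.C_pow,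
          FiniteField.pow_card, hlca]
      · intro k hk
        match k, (by omega : b.natDegree + 1 < k) with
        | (m+1), hm =>
          show Polynomial.X * c' (m+1) + c' m ^ Fintype.card Fq = 0
          rw [hcz _ (by omega), hcz _ (by omega), mul_zero,
            zero_pow Fintype.card_ne_zero, add_zero]
      · have hterm : ∀ k, Polynomial.C (c k) * Polynomial.X ^ (Fintype.card Fq ^ k)
            = Polynomial.C Polynomial.X
                * (Polynomial.C (c' k) * Polynomial.X ^ (Fintype.card Fq ^ k))
              + Polynomial.C (d k) * Polynomial.X ^ (Fintype.card Fq ^ k) := by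
          intro k
          show Polynomial.C (Polynomial.X * c' k + d k) * _ = _
          rw [Polynomial.C_add, Polynomial.C_mul, add_mul, mul_assoc]
        rw [key, Finset.sum_congr rfl fun k _ => hterm k, Finset.sum_add_distrib]
        congr 1
        · rw [← Finset.mul_sum, hd, Finset.sum_range_succ, hcz _ (by omega)]
          rw [hrepr]
          simp
        · rw [hd, Finset.sum_range_succ']
          have hstep : ∀ i, Polynomial.C (d (i + 1)) * Polynomial.X ^ (Fintype.card Fq ^ (i + 1))
              = Polynomial.C (c' i ^ Fintype.card Fq)
                  * Polynomial.X ^ (Fintype.card Fq ^ (i + 1)) := fun i => rfl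
          rw [Finset.sum_congr rfl fun i _ => hstep i, hpow]
          show _ = _ + Polynomial.C (Polynomial.C (a.coeff 0)) * Polynomial.X ^ (Fintype.card Fq ^ 0)
          rw [pow_zero, pow_one]




lemma not_dvd_X_pow_card_pow_sub_X (π : Polynomial Fq) (hπirr : Irreducible π)
    {i : ℕ} (hi : 1 ≤ i) (hid : i < π.natDegree) :
    ¬ (π ∣ (Polynomial.X ^ (Fintype.card Fq ^ i) - Polynomial.X)) := by
  classical
  intro hdvd
  haveI := Fact.mk hπirr
  have hπ0 : π ≠ 0 := hπirr.ne_zero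
  obtain ⟨e, hp, hcard⟩ := FiniteField.card Fq (ringChar Fq)
  set p := ringChar Fq with hpdef
  set k := AdjoinRoot π with hkdef
  haveI : CharP k p :=
    charP_of_injective_algebraMap (algebraMap Fq k).injective p
  haveI : ExpChar k p := ExpChar.prime hp
  have hexp : Fintype.card Fq ^ i = p ^ (e * i) := by
    rw [hcard, ← pow_mul]
  -- every element of k is fixed by x ↦ x ^ q ^ i
  have hfix : ∀ x : k, x ^ (Fintype.card Fq ^ i) = x := by
    have heq : (iterateFrobenius k p (e * i)).comp (AdjoinRoot.mk π) = AdjoinRoot.mk π := by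
      apply Polynomial.ringHom_ext
      · intro s
        simp only [RingHom.comp_apply, iterateFrobenius_def]
        rw [← map_pow, ← map_pow, ← hexp, FiniteField.pow_card_pow]
      · simp only [RingHom.comp_apply, iterateFrobenius_def]
        rw [← map_pow, ← hexp]
        have hroot : (AdjoinRoot.mk π) (Polynomial.X ^ (Fintype.card Fq ^ i) - Polynomial.X)
            = 0 := AdjoinRoot.mk_eq_zero.mpr hdvd
        rw [map_sub] at hroot
        rw [map_pow] at hroot ⊢
        have := sub_eq_zero.mp hroot
        rw [this]
    intro x
    obtain ⟨g, rfl⟩ := AdjoinRoot.mk_surjective x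
    have := RingHom.congr_fun heq g
    rw [RingHom.comp_apply, iterateFrobenius_def, ← hexp] at this
    exact this
  -- cardinality
  set pb := AdjoinRoot.powerBasis hπ0 with hpbdef
  haveI : Fintype k := Module.fintypeOfFintype pb.basis
  have hcardk : Fintype.card k = Fintype.card Fq ^ π.natDegree := by
    rw [Module.card_fintype pb.basis, Fintype.card_fin, AdjoinRoot.powerBasis_dim]
  -- the polynomial X^(q^i) - X over k
  set P : Polynomial k := Polynomial.X ^ (Fintype.card Fq ^ i) - Polynomial.X with hPdef
  have hq1 : 1 < Fintype.card Fq := Fintype.one_lt_card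
  have hPne : P ≠ 0 :=
    FiniteField.X_pow_card_pow_sub_X_ne_zero k (by omega) hq1
  have hPdeg : P.natDegree = Fintype.card Fq ^ i :=
    FiniteField.X_pow_card_pow_sub_X_natDegree_eq k (by omega) hq1
  have hsub : (Finset.univ : Finset k).val ⊆ P.roots := by
    intro x hx
    rw [Polynomial.mem_roots hPne]
    simp only [Polynomial.IsRoot, hPdef, Polynomial.eval_sub, Polynomial.eval_pow,
      Polynomial.eval_X]
    rw [hfix x, sub_self]
  have hle := Polynomial.card_le_degree_of_subset_roots hsub
  rw [Finset.card_univ, hcardk, hPdeg] at hle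
  have : Fintype.card Fq ^ i < Fintype.card Fq ^ π.natDegree :=
    Nat.pow_lt_pow_right hq1 hid
  omega



lemma coeff_sum_C_mul_X_pow {R : Type*} [Semiring R] {m : ℕ} (u : ℕ → R) (n : ℕ → ℕ)
    (hn : ∀ k, ∀ l, n k = n l → k = l) {i : ℕ} (hi : i ∈ Finset.range m) :
    (∑ k ∈ Finset.range m, Polynomial.C (u k) * Polynomial.X ^ (n k)).coeff (n i) = u i := by
  rw [Polynomial.finset_sum_coeff, Finset.sum_eq_single i]
  · simp [Polynomial.coeff_C_mul, Polynomial.coeff_X_pow]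
  · intro k _ hk
    have : n i ≠ n k := fun h => hk (hn k i h.symm)
    simp [Polynomial.coeff_C_mul, Polynomial.coeff_X_pow, this]
  · intro h; exact absurd hi h

lemma coeff_sum_C_mul_X_pow_of_ne {R : Type*} [Semiring R] {m : ℕ} (u : ℕ → R) (n : ℕ → ℕ)
    {N : ℕ} (hN : ∀ k ∈ Finset.range m, n k ≠ N) :
    (∑ k ∈ Finset.range m, Polynomial.C (u k) * Polynomial.X ^ (n k)).coeff N = 0 := by
  rw [Polynomial.finset_sum_coeff]
  apply Finset.sum_eq_zero
  intro k hk
  simp [Polynomial.coeff_C_mul, Polynomial.coeff_X_pow, Ne.symm (hN k hk)]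


/-- the middle coefficients of `ρ π` are divisible by `π` -/
lemma carlitz_coeff_dvd (ρ : Polynomial Fq → Polynomial (Polynomial Fq))
    (hρT : ρ Polynomial.X =
      Polynomial.C Polynomial.X * Polynomial.X + Polynomial.X ^ Fintype.card Fq)
    (hρmul : ∀ a b : Polynomial Fq, ρ (a * b) = (ρ a).comp (ρ b))
    (π : Polynomial Fq) (hπirr : Irreducible π) (c : ℕ → Polynomial Fq)
    (hc0 : c 0 = π)
    (hrepr : ρ π = ∑ k ∈ Finset.range (π.natDegree + 1),
        Polynomial.C (c k) * Polynomial.X ^ (Fintype.card Fq ^ k)) :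
    ∀ i, i < π.natDegree → π ∣ c i := by
  classical
  obtain ⟨e, hp, hcard⟩ := FiniteField.card Fq (ringChar Fq)
  set p := ringChar Fq with hpdef
  haveI : CharP (Polynomial Fq) p := charP_of_injective_ringHom Polynomial.C_injective p
  haveI : CharP (Polynomial (Polynomial Fq)) p :=
    charP_of_injective_ringHom Polynomial.C_injective p
  haveI : ExpChar (Polynomial (Polynomial Fq)) p := ExpChar.prime hp
  have hq1 : 1 < Fintype.card Fq := Fintype.one_lt_card
  have hinj : ∀ k l : ℕ, Fintype.card Fq ^ k = Fintype.card Fq ^ l → k = l :=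
    fun k l h => Nat.pow_right_injective (by omega) h
  set dd := π.natDegree with hdd
  -- the two expansions of ρ (X * π) = ρ (π * X)
  have hmain : ∑ k ∈ Finset.range (dd + 1),
        Polynomial.C (Polynomial.X * c k) * Polynomial.X ^ (Fintype.card Fq ^ k)
      + ∑ k ∈ Finset.range (dd + 1),
        Polynomial.C (c k ^ Fintype.card Fq) * Polynomial.X ^ (Fintype.card Fq ^ (k + 1))
      = ∑ k ∈ Finset.range (dd + 1),
        Polynomial.C (c k * Polynomial.X ^ (Fintype.card Fq ^ k))
          * Polynomial.X ^ (Fintype.card Fq ^ k)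
      + ∑ k ∈ Finset.range (dd + 1),
        Polynomial.C (c k) * Polynomial.X ^ (Fintype.card Fq ^ (k + 1)) := by
    have hcomm : ρ (Polynomial.X * π) = ρ (π * Polynomial.X) := by rw [mul_comm]
    rw [carlitz_rec ρ hρT hρmul, hρmul] at hcomm
    -- LHS of hcomm
    have hL1 : Polynomial.C Polynomial.X * ρ π
        = ∑ k ∈ Finset.range (dd + 1),
            Polynomial.C (Polynomial.X * c k) * Polynomial.X ^ (Fintype.card Fq ^ k) := by
      rw [hrepr, Finset.mul_sum]
      refine Finset.sum_congr rfl fun k _ => ?_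
      rw [Polynomial.C_mul]
      ring
    have hL2 : ρ π ^ Fintype.card Fq
        = ∑ k ∈ Finset.range (dd + 1),
            Polynomial.C (c k ^ Fintype.card Fq)
              * Polynomial.X ^ (Fintype.card Fq ^ (k + 1)) := by
      rw [hrepr, hcard, sum_pow_char_pow]
      refine Finset.sum_congr rfl fun k _ => ?_
      rw [mul_pow, ← Polynomial.C_pow, ← pow_mul, ← pow_succ]
    have hR : (ρ π).comp (ρ Polynomial.X)
        = ∑ k ∈ Finset.range (dd + 1),
            Polynomial.C (c k * Polynomial.X ^ (Fintype.card Fq ^ k))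
              * Polynomial.X ^ (Fintype.card Fq ^ k)
          + ∑ k ∈ Finset.range (dd + 1),
            Polynomial.C (c k) * Polynomial.X ^ (Fintype.card Fq ^ (k + 1)) := by
      rw [hρT, hrepr]
      rw [← Finset.sum_add_distrib, Polynomial.sum_comp]
      refine Finset.sum_congr rfl fun k _ => ?_
      rw [mul_comp, C_comp, pow_comp, X_comp]
      have hfd : ((Polynomial.C Polynomial.X * Polynomial.X
            + Polynomial.X ^ Fintype.card Fq : Polynomial (Polynomial Fq))) ^ (Fintype.card Fq ^ k)
          = Polynomial.C (Polynomial.X ^ (Fintype.card Fq ^ k))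
              * Polynomial.X ^ (Fintype.card Fq ^ k)
            + Polynomial.X ^ (Fintype.card Fq ^ (k + 1)) := by
        have hfrob : ∀ (x y : Polynomial (Polynomial Fq)) (m : ℕ),
            (x + y) ^ (Fintype.card Fq ^ m)
              = x ^ (Fintype.card Fq ^ m) + y ^ (Fintype.card Fq ^ m) := by
          intro x y m
          rw [hcard, ← pow_mul, add_pow_expChar_pow]
        rw [hfrob, mul_pow, ← Polynomial.C_pow, ← pow_mul, ← pow_succ']
      rw [hfd, mul_add, ← mul_assoc, ← Polynomial.C_mul]
    rw [hL1, hL2] at hcomm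
    rw [hR] at hcomm
    exact hcomm
  -- extract the coefficient identity at exponent q^(i+1)
  have hEq : ∀ i, i + 1 ≤ dd →
      Polynomial.X * c (i + 1) + c i ^ Fintype.card Fq
        = c (i + 1) * Polynomial.X ^ (Fintype.card Fq ^ (i + 1)) + c i := by
    intro i hi
    have := congrArg (fun f => Polynomial.coeff f (Fintype.card Fq ^ (i + 1))) hmain
    simp only [Polynomial.coeff_add] at this
    rw [coeff_sum_C_mul_X_pow (fun k => Polynomial.X * c k) (fun k => Fintype.card Fq ^ k)
        hinj (Finset.mem_range.mpr (by omega))] at this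
    rw [coeff_sum_C_mul_X_pow (fun k => c k ^ Fintype.card Fq)
        (fun k => Fintype.card Fq ^ (k + 1))
        (fun k l h => by have := hinj (k + 1) (l + 1) h; omega)
        (Finset.mem_range.mpr (by omega : i < dd + 1))] at this
    rw [coeff_sum_C_mul_X_pow (fun k => c k * Polynomial.X ^ (Fintype.card Fq ^ k))
        (fun k => Fintype.card Fq ^ k) hinj (Finset.mem_range.mpr (by omega))] at this
    rw [coeff_sum_C_mul_X_pow (fun k => c k) (fun k => Fintype.card Fq ^ (k + 1))
        (fun k l h => by have := hinj (k + 1) (l + 1) h; omega)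
        (Finset.mem_range.mpr (by omega : i < dd + 1))] at this
    exact this
  have hprime : Prime π := UniqueFactorizationMonoid.irreducible_iff_prime.mp hπirr
  intro i
  induction i with
  | zero => intro _; rw [hc0]
  | succ i ihp =>
    intro h
    have hdvd_prev : π ∣ c i := ihp (by omega)
    have hfact : c (i + 1) * (Polynomial.X ^ (Fintype.card Fq ^ (i + 1)) - Polynomial.X)
        = c i ^ Fintype.card Fq - c i := by
      linear_combination -(hEq i (by omega))
    have hdvd2 : π ∣ c (i + 1) * (Polynomial.X ^ (Fintype.card Fq ^ (i + 1)) - Polynomial.X) :=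
      hfact ▸ dvd_sub (dvd_pow hdvd_prev Fintype.card_ne_zero) hdvd_prev
    rcases hprime.dvd_or_dvd hdvd2 with h1 | h2
    · exact h1
    · exact absurd h2 (not_dvd_X_pow_card_pow_sub_X π hπirr (by omega) (by omega))


end CarlitzAux

/-- Let `A = 𝔽_q[T]` and let `ρ : A → A[X]` be the Carlitz module, determined by
`ρ_c(X) = cX` for constants `c`, `ρ_T(X) = TX + X^q`, additivity, and `ρ_{ab} = ρ_a ∘ ρ_b`.
For every monic irreducible `π ∈ A`, the polynomial `X` divides `ρ_π(X)` in `A[X]`, and the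
quotient `ρ_π(X)/X` has coefficients in `A` and is irreducible over the fraction field
`K = 𝔽_q(T)`. -/
theorem carlitz_div_X_irreducible
    (Fq : Type) [Field Fq] [Fintype Fq]
    (ρ : Polynomial Fq → Polynomial (Polynomial Fq))
    (hρC : ∀ c : Fq, ρ (Polynomial.C c) = Polynomial.C (Polynomial.C c) * Polynomial.X)
    (hρT : ρ Polynomial.X =
      Polynomial.C Polynomial.X * Polynomial.X + Polynomial.X ^ Fintype.card Fq)
    (hρadd : ∀ a b : Polynomial Fq, ρ (a + b) = ρ a + ρ b)
    (hρmul : ∀ a b : Polynomial Fq, ρ (a * b) = (ρ a).comp (ρ b))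
    (π : Polynomial Fq) (hπmonic : π.Monic) (hπirr : Irreducible π) :
    ∃ Q : Polynomial (Polynomial Fq),
      ρ π = Polynomial.X * Q ∧
      Irreducible (Q.map (algebraMap (Polynomial Fq) (FractionRing (Polynomial Fq)))) := by
  classical
  obtain ⟨c, hc0, hclead, hcz, hrepr⟩ := CarlitzAux.carlitz_shape ρ hρC hρT hρadd hρmul π
  have hq1 : 1 < Fintype.card Fq := Fintype.one_lt_card
  have hπ0 : π ≠ 0 := hπirr.ne_zero
  have hd1 : 0 < π.natDegree := hπirr.natDegree_pos
  have hinj : ∀ k l : ℕ, Fintype.card Fq ^ k = Fintype.card Fq ^ l → k = l :=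
    fun k l h => Nat.pow_right_injective (by omega) h
  have hdvdc : ∀ i, i < π.natDegree → π ∣ c i :=
    CarlitzAux.carlitz_coeff_dvd ρ hρT hρmul π hπirr c hc0 hrepr
  -- coefficient facts about ρ π
  have h0 : (ρ π).coeff 0 = 0 := by
    rw [hrepr]
    apply CarlitzAux.coeff_sum_C_mul_X_pow_of_ne
    intro k _
    have : 0 < Fintype.card Fq ^ k := pow_pos (by omega) k
    omega
  have h1 : (ρ π).coeff 1 = π := by
    have h := CarlitzAux.coeff_sum_C_mul_X_pow (fun k => c k) (fun k => Fintype.card Fq ^ k)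
      hinj (Finset.mem_range.mpr (by omega : 0 < π.natDegree + 1))
    simp only [pow_zero] at h
    rw [hrepr, h, hc0]
  have htop : (ρ π).coeff (Fintype.card Fq ^ π.natDegree) = 1 := by
    have h := CarlitzAux.coeff_sum_C_mul_X_pow (fun k => c k) (fun k => Fintype.card Fq ^ k)
      hinj (Finset.mem_range.mpr (by omega : π.natDegree < π.natDegree + 1))
    rw [hrepr, h, hclead, hπmonic.leadingCoeff, Polynomial.C_1]
  have hhigh : ∀ m, Fintype.card Fq ^ π.natDegree < m → (ρ π).coeff m = 0 := by
    intro m hm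
    rw [hrepr]
    apply CarlitzAux.coeff_sum_C_mul_X_pow_of_ne
    intro k hk
    have : Fintype.card Fq ^ k ≤ Fintype.card Fq ^ π.natDegree :=
      Nat.pow_le_pow_right (by omega) (by
        have := Finset.mem_range.mp hk; omega)
    omega
  have hdvd_coeff : ∀ m, m < Fintype.card Fq ^ π.natDegree → π ∣ (ρ π).coeff m := by
    intro m hm
    rw [hrepr, Polynomial.finset_sum_coeff]
    apply Finset.dvd_sum
    intro k hk
    rw [Polynomial.coeff_C_mul, Polynomial.coeff_X_pow]
    by_cases hmk : m = Fintype.card Fq ^ k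
    · rw [if_pos hmk, mul_one]
      apply hdvdc
      have : Fintype.card Fq ^ k < Fintype.card Fq ^ π.natDegree := by omega
      exact (Nat.pow_lt_pow_iff_right hq1).mp this
    · rw [if_neg hmk, mul_zero]
      exact dvd_zero _
  have hρne : ρ π ≠ 0 := fun h => by simp [h] at htop
  have hdeg : (ρ π).natDegree = Fintype.card Fq ^ π.natDegree := by
    apply le_antisymm
    · exact Polynomial.natDegree_le_iff_coeff_eq_zero.mpr hhigh
    · exact Polynomial.le_natDegree_of_ne_zero (htop ▸ one_ne_zero)
  have hmonic : (ρ π).Monic := by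
    rw [Polynomial.Monic, Polynomial.leadingCoeff, hdeg, htop]
  set Q := (ρ π).divX with hQdef
  have hXQ : ρ π = Polynomial.X * Q := by
    conv_lhs => rw [← Polynomial.X_mul_divX_add (ρ π)]
    rw [h0, Polynomial.C_0, add_zero]
  have hQmonic : Q.Monic := by
    have hm := hmonic
    rw [hXQ, Polynomial.Monic, Polynomial.leadingCoeff_mul, Polynomial.leadingCoeff_X,
      one_mul] at hm
    exact hm
  have hQdeg : Q.natDegree = Fintype.card Fq ^ π.natDegree - 1 := by
    rw [hQdef, Polynomial.natDegree_divX_eq_natDegree_tsub_one, hdeg]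
  have hQcoeff : ∀ j, Q.coeff j = (ρ π).coeff (j + 1) := fun j => Polynomial.coeff_divX
  have hqd1 : 1 < Fintype.card Fq ^ π.natDegree := Nat.one_lt_pow (by omega) hq1
  have hprime : Prime π := UniqueFactorizationMonoid.irreducible_iff_prime.mp hπirr
  have hPprime : (Ideal.span {π} : Ideal (Polynomial Fq)).IsPrime :=
    (Ideal.span_singleton_prime hπ0).mpr hprime
  have heis : Q.IsEisensteinAt (Ideal.span {π}) := by
    constructor
    · rw [hQmonic.leadingCoeff]
      intro hmem
      rw [Ideal.mem_span_singleton] at hmem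
      exact hπirr.not_isUnit (isUnit_of_dvd_one hmem)
    · intro n hn
      rw [hQcoeff n, Ideal.mem_span_singleton]
      apply hdvd_coeff
      rw [hQdeg] at hn
      omega
    · rw [hQcoeff 0, h1, Ideal.span_singleton_pow, Ideal.mem_span_singleton]
      intro hdvd
      obtain ⟨s, hs⟩ := hdvd
      have h2 : π * 1 = π * (π * s) := by
        conv_lhs => rw [mul_one, hs]
        ring
      have h1eq := mul_left_cancel₀ hπ0 h2
      exact hπirr.not_isUnit (IsUnit.of_mul_eq_one _ h1eq.symm)
  have hQirr : Irreducible Q :=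
    heis.irreducible hPprime hQmonic.isPrimitive (by rw [hQdeg]; omega)
  exact ⟨Q, hXQ,
    (hQmonic.irreducible_iff_irreducible_map_fraction_map).mp hQirr⟩
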